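/- arXiv:2209.12350 — 4 statements merged into one kernel-verified Lean document; each statement's English description precedes it below -/
import Mathlib

section
/- (Theorem 1, finite version) Suppose μ_E and μ_θ are probability mass functions on S × A, both inducing joints ρ_i(s,a,s') = μ_i(s,a)P(s'|s,a) with a common strictly positive transition kernel P, with all relevant masses positive. Let J(μ) = (1/(1−γ))·∑_{s,a} μ(s,a)r(s,a) where |r| ≤ R_max and 0 ≤ γ < 1. Then |J(μ_E) − J(μ_θ)| ≤ (√2·R_max/(1−γ))·√(D_χ²(ρ_θ(a|s,s')||ρ_E(a|s,s')) + D_χ²(ρ̄_θ(s,s')||ρ̄_E(s,s'))), where the first term is the χ²-divergence-of-conditionals expression ∑_{s,a,s'} ρ̄_θ(s,s')·(ρ_θ(a|s,s') − ρ_E(a|s,s'))²/ρ_E(a|s,s') aggregated appropriately so that the KL chain-rule bound applies, and ρ̄_i(s,s') = ∑_a ρ_i(s,a,s'). -/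
lemma cs_helper {ι : Type*} [Fintype ι] (w q d : ι → ℝ)
    (hw : ∀ i, 0 ≤ w i) (hq : ∀ i, 0 < q i) (hwq : ∑ i, w i * q i ≤ 1) :
    ∑ i, w i * |d i| ≤ Real.sqrt (∑ i, w i * d i ^ 2 / q i) := by
  have key : (∑ i, w i * |d i|) ^ 2 ≤ ∑ i, w i * d i ^ 2 / q i := by
    have cs := Finset.sum_mul_sq_le_sq_mul_sq Finset.univ
      (fun i => Real.sqrt (w i * q i)) (fun i => Real.sqrt (w i / q i) * |d i|)
    have e1 : ∀ i : ι, Real.sqrt (w i * q i) * (Real.sqrt (w i / q i) * |d i|)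
        = w i * |d i| := by
      intro i
      rw [← mul_assoc, ← Real.sqrt_mul (mul_nonneg (hw i) (hq i).le)]
      have h : w i * q i * (w i / q i) = (w i) ^ 2 := by
        field_simp [(hq i).ne']
      rw [h, Real.sqrt_sq (hw i)]
    have e2 : ∀ i : ι, Real.sqrt (w i * q i) ^ 2 = w i * q i := fun i =>
      Real.sq_sqrt (mul_nonneg (hw i) (hq i).le)
    have e3 : ∀ i : ι, (Real.sqrt (w i / q i) * |d i|) ^ 2 = w i * d i ^ 2 / q i := by
      intro i
      rw [mul_pow, Real.sq_sqrt (div_nonneg (hw i) (hq i).le), sq_abs]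
      ring
    simp only [e1, e2, e3] at cs
    calc (∑ i, w i * |d i|) ^ 2 ≤ (∑ i, w i * q i) * ∑ i, w i * d i ^ 2 / q i := cs
      _ ≤ 1 * ∑ i, w i * d i ^ 2 / q i := by
          apply mul_le_mul_of_nonneg_right hwq
          exact Finset.sum_nonneg fun i _ =>
            div_nonneg (mul_nonneg (hw i) (sq_nonneg _)) (hq i).le
      _ = _ := one_mul _
  have hnn : 0 ≤ ∑ i, w i * |d i| :=
    Finset.sum_nonneg fun i _ => mul_nonneg (hw i) (abs_nonneg _)
  calc ∑ i, w i * |d i| = Real.sqrt ((∑ i, w i * |d i|) ^ 2) := (Real.sqrt_sq hnn).symm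
    _ ≤ _ := Real.sqrt_le_sqrt key

lemma sqrt_add_sqrt_le' {x y : ℝ} (hx : 0 ≤ x) (hy : 0 ≤ y) :
    Real.sqrt x + Real.sqrt y ≤ Real.sqrt 2 * Real.sqrt (x + y) := by
  have h2 : (Real.sqrt x + Real.sqrt y) ^ 2 ≤ 2 * (x + y) := by
    nlinarith [Real.sq_sqrt hx, Real.sq_sqrt hy, sq_nonneg (Real.sqrt x - Real.sqrt y)]
  calc Real.sqrt x + Real.sqrt y
      = Real.sqrt ((Real.sqrt x + Real.sqrt y) ^ 2) :=
        (Real.sqrt_sq (by positivity)).symm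
    _ ≤ Real.sqrt (2 * (x + y)) := Real.sqrt_le_sqrt h2
    _ = Real.sqrt 2 * Real.sqrt (x + y) := Real.sqrt_mul (by norm_num) _

theorem theorem_one_finite {S A : Type*} [Fintype S] [Fintype A]
    (P : S → A → S → ℝ) (μE μθ : S → A → ℝ) (r : S → A → ℝ) (Rmax γ : ℝ)
    (hPpos : ∀ s a s', 0 < P s a s') (hPsum : ∀ s a, ∑ s', P s a s' = 1)
    (hμEpos : ∀ s a, 0 < μE s a) (hμθpos : ∀ s a, 0 < μθ s a)
    (hμEsum : ∑ s, ∑ a, μE s a = 1) (hμθsum : ∑ s, ∑ a, μθ s a = 1)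
    (hr : ∀ s a, |r s a| ≤ Rmax) (hγ0 : 0 ≤ γ) (hγ1 : γ < 1) :
    |(1 / (1 - γ)) * (∑ s, ∑ a, μE s a * r s a)
        - (1 / (1 - γ)) * (∑ s, ∑ a, μθ s a * r s a)|
      ≤ (Real.sqrt 2 * Rmax / (1 - γ)) *
        Real.sqrt
          ((∑ s, ∑ a, ∑ s', (∑ b, μθ s b * P s b s') *
              ((μθ s a * P s a s' / ∑ b, μθ s b * P s b s')
                - (μE s a * P s a s' / ∑ b, μE s b * P s b s')) ^ 2
              / (μE s a * P s a s' / ∑ b, μE s b * P s b s'))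
          + ∑ s, ∑ s', ((∑ b, μθ s b * P s b s') - ∑ b, μE s b * P s b s') ^ 2
              / ∑ b, μE s b * P s b s') := by
  -- Nonemptiness
  have hS : Nonempty S := by
    by_contra h
    rw [not_nonempty_iff] at h
    simp [Finset.univ_eq_empty] at hμEsum
  have hA : Nonempty A := by
    by_contra h
    rw [not_nonempty_iff] at h
    simp [Finset.univ_eq_empty] at hμEsum
  obtain ⟨s0⟩ := hS
  obtain ⟨a0⟩ := hA
  have hR : 0 ≤ Rmax := le_trans (abs_nonneg _) (hr s0 a0)
  have hγ : (0:ℝ) < 1 - γ := by linarith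
  -- positivity of marginals
  have hrbEpos : ∀ s s', 0 < ∑ b, μE s b * P s b s' := fun s s' =>
    Finset.sum_pos (fun b _ => mul_pos (hμEpos s b) (hPpos s b s'))
      ⟨a0, Finset.mem_univ a0⟩
  have hrbθpos : ∀ s s', 0 < ∑ b, μθ s b * P s b s' := fun s s' =>
    Finset.sum_pos (fun b _ => mul_pos (hμθpos s b) (hPpos s b s'))
      ⟨a0, Finset.mem_univ a0⟩
  -- conditional of E sums to 1 over a
  have hcEsum : ∀ s s', ∑ a, μE s a * P s a s' / (∑ b, μE s b * P s b s') = 1 := by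
    intro s s'
    rw [← Finset.sum_div, div_self (hrbEpos s s').ne']
  -- marginal of θ sums to 1
  have hrbθsum : ∑ s, ∑ s', (∑ b, μθ s b * P s b s') = 1 := by
    calc ∑ s, ∑ s', (∑ b, μθ s b * P s b s')
        = ∑ s, ∑ b, ∑ s', μθ s b * P s b s' := by
          congr 1; ext s; rw [Finset.sum_comm]
      _ = ∑ s, ∑ b, μθ s b := by
          congr 1; ext s; congr 1; ext b
          rw [← Finset.mul_sum, hPsum, mul_one]
      _ = 1 := hμθsum
  have hrbEsum : ∑ s, ∑ s', (∑ b, μE s b * P s b s') = 1 := by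
    calc ∑ s, ∑ s', (∑ b, μE s b * P s b s')
        = ∑ s, ∑ b, ∑ s', μE s b * P s b s' := by
          congr 1; ext s; rw [Finset.sum_comm]
      _ = ∑ s, ∑ b, μE s b := by
          congr 1; ext s; congr 1; ext b
          rw [← Finset.mul_sum, hPsum, mul_one]
      _ = 1 := hμEsum
  -- abbreviations only in the proof text
  -- Step A: reward difference bounded by TV-type sum
  have stepA : |(∑ s, ∑ a, μE s a * r s a) - (∑ s, ∑ a, μθ s a * r s a)|
      ≤ Rmax * ∑ s, ∑ a, |μθ s a - μE s a| := by
    have h1 : (∑ s, ∑ a, μE s a * r s a) - (∑ s, ∑ a, μθ s a * r s a)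
        = ∑ s, ∑ a, (μE s a - μθ s a) * r s a := by
      rw [← Finset.sum_sub_distrib]
      congr 1; ext s
      rw [← Finset.sum_sub_distrib]
      congr 1; ext a
      ring
    rw [h1, Finset.mul_sum]
    refine le_trans (Finset.abs_sum_le_sum_abs _ _) (Finset.sum_le_sum fun s _ => ?_)
    rw [Finset.mul_sum]
    refine le_trans (Finset.abs_sum_le_sum_abs _ _) (Finset.sum_le_sum fun a _ => ?_)
    rw [abs_mul, abs_sub_comm]
    calc |μθ s a - μE s a| * |r s a| ≤ |μθ s a - μE s a| * Rmax :=
          mul_le_mul_of_nonneg_left (hr s a) (abs_nonneg _)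
      _ = Rmax * |μθ s a - μE s a| := mul_comm _ _
  -- Step B: expand over s'
  have stepB : ∀ s a, |μθ s a - μE s a|
      = ∑ s', |μθ s a * P s a s' - μE s a * P s a s'| := by
    intro s a
    have : ∀ s', |μθ s a * P s a s' - μE s a * P s a s'|
        = |μθ s a - μE s a| * P s a s' := by
      intro s'
      rw [← sub_mul, abs_mul, abs_of_nonneg (hPpos s a s').le]
    simp only [this]
    rw [← Finset.mul_sum, hPsum, mul_one]
  -- Step C: pointwise decomposition
  have stepC : ∀ s a s', |μθ s a * P s a s' - μE s a * P s a s'|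
      ≤ (∑ b, μθ s b * P s b s') *
          |(μθ s a * P s a s' / ∑ b, μθ s b * P s b s')
            - (μE s a * P s a s' / ∑ b, μE s b * P s b s')|
        + (μE s a * P s a s' / ∑ b, μE s b * P s b s') *
          |(∑ b, μθ s b * P s b s') - ∑ b, μE s b * P s b s'| := by
    intro s a s'
    set T := ∑ b, μθ s b * P s b s' with hT
    set E := ∑ b, μE s b * P s b s' with hE
    set cT := μθ s a * P s a s' / T with hcT
    set cE := μE s a * P s a s' / E with hcE
    have h1 : μθ s a * P s a s' = cT * T := by
      rw [hcT, div_mul_cancel₀ _ (hrbθpos s s').ne']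
    have h2 : μE s a * P s a s' = cE * E := by
      rw [hcE, div_mul_cancel₀ _ (hrbEpos s s').ne']
    have hcEnn : 0 ≤ cE :=
      div_nonneg (mul_pos (hμEpos s a) (hPpos s a s')).le (hrbEpos s s').le
    calc |μθ s a * P s a s' - μE s a * P s a s'|
        = |(cT - cE) * T + cE * (T - E)| := by rw [h1, h2]; congr 1; ring
      _ ≤ |(cT - cE) * T| + |cE * (T - E)| := abs_add_le _ _
      _ = T * |cT - cE| + cE * |T - E| := by
          rw [abs_mul, abs_mul, abs_of_nonneg (hrbθpos s s').le,
            abs_of_nonneg hcEnn, mul_comm]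
  -- Step D1: T1 bound via Cauchy-Schwarz helper
  have stepD1 : ∑ s, ∑ a, ∑ s', (∑ b, μθ s b * P s b s') *
        |(μθ s a * P s a s' / ∑ b, μθ s b * P s b s')
          - (μE s a * P s a s' / ∑ b, μE s b * P s b s')|
      ≤ Real.sqrt (∑ s, ∑ a, ∑ s', (∑ b, μθ s b * P s b s') *
          ((μθ s a * P s a s' / ∑ b, μθ s b * P s b s')
            - (μE s a * P s a s' / ∑ b, μE s b * P s b s')) ^ 2
          / (μE s a * P s a s' / ∑ b, μE s b * P s b s')) := by
    have h := cs_helper (ι := S × A × S)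
      (fun x => ∑ b, μθ x.1 b * P x.1 b x.2.2)
      (fun x => μE x.1 x.2.1 * P x.1 x.2.1 x.2.2 / ∑ b, μE x.1 b * P x.1 b x.2.2)
      (fun x => (μθ x.1 x.2.1 * P x.1 x.2.1 x.2.2 / ∑ b, μθ x.1 b * P x.1 b x.2.2)
        - (μE x.1 x.2.1 * P x.1 x.2.1 x.2.2 / ∑ b, μE x.1 b * P x.1 b x.2.2))
      (fun x => (hrbθpos x.1 x.2.2).le)
      (fun x => div_pos (mul_pos (hμEpos x.1 x.2.1) (hPpos x.1 x.2.1 x.2.2))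
        (hrbEpos x.1 x.2.2))
      ?_
    · simpa only [Fintype.sum_prod_type] using h
    · rw [Fintype.sum_prod_type]
      have : ∀ s : S, ∑ y : A × S, (∑ b, μθ s b * P s b y.2) *
          (μE s y.1 * P s y.1 y.2 / ∑ b, μE s b * P s b y.2)
          = ∑ s', (∑ b, μθ s b * P s b s') := by
        intro s
        rw [Fintype.sum_prod_type, Finset.sum_comm]
        refine Finset.sum_congr rfl fun s' _ => ?_
        dsimp only
        rw [← Finset.mul_sum, hcEsum, mul_one]
      rw [Finset.sum_congr rfl fun s _ => this s, hrbθsum]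
  -- Step D2: T2 bound
  have stepD2 : ∑ s, ∑ s', |(∑ b, μθ s b * P s b s') - ∑ b, μE s b * P s b s'|
      ≤ Real.sqrt (∑ s, ∑ s', ((∑ b, μθ s b * P s b s') - ∑ b, μE s b * P s b s') ^ 2
          / ∑ b, μE s b * P s b s') := by
    have h := cs_helper (ι := S × S)
      (fun _ => (1:ℝ))
      (fun x => ∑ b, μE x.1 b * P x.1 b x.2)
      (fun x => (∑ b, μθ x.1 b * P x.1 b x.2) - ∑ b, μE x.1 b * P x.1 b x.2)
      (fun _ => zero_le_one)
      (fun x => hrbEpos x.1 x.2)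
      ?_
    · simpa only [Fintype.sum_prod_type, one_mul] using h
    · simp only [one_mul, Fintype.sum_prod_type]
      exact hrbEsum.le
  -- Step E: sum of conditional part over a,s' collapses
  have stepE : ∑ s, ∑ a, ∑ s',
        (μE s a * P s a s' / ∑ b, μE s b * P s b s') *
          |(∑ b, μθ s b * P s b s') - ∑ b, μE s b * P s b s'|
      = ∑ s, ∑ s', |(∑ b, μθ s b * P s b s') - ∑ b, μE s b * P s b s'| := by
    refine Finset.sum_congr rfl fun s _ => ?_
    rw [Finset.sum_comm]
    refine Finset.sum_congr rfl fun s' _ => ?_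
    rw [← Finset.sum_mul, hcEsum, one_mul]
  -- Put the TV bound together
  have stepTV : ∑ s, ∑ a, |μθ s a - μE s a|
      ≤ Real.sqrt (∑ s, ∑ a, ∑ s', (∑ b, μθ s b * P s b s') *
          ((μθ s a * P s a s' / ∑ b, μθ s b * P s b s')
            - (μE s a * P s a s' / ∑ b, μE s b * P s b s')) ^ 2
          / (μE s a * P s a s' / ∑ b, μE s b * P s b s'))
        + Real.sqrt (∑ s, ∑ s', ((∑ b, μθ s b * P s b s') - ∑ b, μE s b * P s b s') ^ 2
          / ∑ b, μE s b * P s b s') := by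
    calc ∑ s, ∑ a, |μθ s a - μE s a|
        = ∑ s, ∑ a, ∑ s', |μθ s a * P s a s' - μE s a * P s a s'| := by
          refine Finset.sum_congr rfl fun s _ => Finset.sum_congr rfl fun a _ => ?_
          exact stepB s a
      _ ≤ ∑ s, ∑ a, ∑ s', ((∑ b, μθ s b * P s b s') *
            |(μθ s a * P s a s' / ∑ b, μθ s b * P s b s')
              - (μE s a * P s a s' / ∑ b, μE s b * P s b s')|
          + (μE s a * P s a s' / ∑ b, μE s b * P s b s') *
            |(∑ b, μθ s b * P s b s') - ∑ b, μE s b * P s b s'|) := by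
          refine Finset.sum_le_sum fun s _ => Finset.sum_le_sum fun a _ =>
            Finset.sum_le_sum fun s' _ => stepC s a s'
      _ = (∑ s, ∑ a, ∑ s', (∑ b, μθ s b * P s b s') *
            |(μθ s a * P s a s' / ∑ b, μθ s b * P s b s')
              - (μE s a * P s a s' / ∑ b, μE s b * P s b s')|)
          + ∑ s, ∑ a, ∑ s', (μE s a * P s a s' / ∑ b, μE s b * P s b s') *
            |(∑ b, μθ s b * P s b s') - ∑ b, μE s b * P s b s'| := by
          simp only [Finset.sum_add_distrib]
      _ ≤ _ := by
          rw [stepE]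
          exact add_le_add stepD1 stepD2
  -- positivity of the two chi-square sums
  have hXnn : 0 ≤ ∑ s, ∑ a, ∑ s', (∑ b, μθ s b * P s b s') *
      ((μθ s a * P s a s' / ∑ b, μθ s b * P s b s')
        - (μE s a * P s a s' / ∑ b, μE s b * P s b s')) ^ 2
      / (μE s a * P s a s' / ∑ b, μE s b * P s b s') :=
    Finset.sum_nonneg fun s _ => Finset.sum_nonneg fun a _ =>
      Finset.sum_nonneg fun s' _ =>
        div_nonneg (mul_nonneg (hrbθpos s s').le (sq_nonneg _))
          (div_nonneg (mul_pos (hμEpos s a) (hPpos s a s')).le (hrbEpos s s').le)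
  have hYnn : 0 ≤ ∑ s, ∑ s', ((∑ b, μθ s b * P s b s') - ∑ b, μE s b * P s b s') ^ 2
      / ∑ b, μE s b * P s b s' :=
    Finset.sum_nonneg fun s _ => Finset.sum_nonneg fun s' _ =>
      div_nonneg (sq_nonneg _) (hrbEpos s s').le
  -- final combination
  rw [← mul_sub, abs_mul, abs_of_pos (by positivity : (0:ℝ) < 1 / (1 - γ))]
  calc (1 / (1 - γ)) * |(∑ s, ∑ a, μE s a * r s a) - ∑ s, ∑ a, μθ s a * r s a|
      ≤ (1 / (1 - γ)) * (Rmax * ∑ s, ∑ a, |μθ s a - μE s a|) :=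
        mul_le_mul_of_nonneg_left stepA (by positivity)
    _ ≤ (1 / (1 - γ)) * (Rmax * (Real.sqrt _ + Real.sqrt _)) :=
        mul_le_mul_of_nonneg_left
          (mul_le_mul_of_nonneg_left stepTV hR) (by positivity)
    _ ≤ (1 / (1 - γ)) * (Rmax * (Real.sqrt 2 * Real.sqrt (_ + _))) :=
        mul_le_mul_of_nonneg_left
          (mul_le_mul_of_nonneg_left (sqrt_add_sqrt_le' hXnn hYnn) hR)
          (by positivity)
    _ = (Real.sqrt 2 * Rmax / (1 - γ)) * Real.sqrt (_ + _) := by ring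
end

section
/- If the transition kernel is deterministic/injective in the action, i.e. for each (s,s') there is at most one action a with P(s'|s,a) > 0, then the conditional distributions ρ_θ(·|s,s') and ρ_E(·|s,s') coincide wherever both marginals are positive, hence D_KL(ρ_θ(a|s,s')||ρ_E(a|s,s')) = 0 and consequently D_KL of the (s,s')-marginals equals D_KL of the (s,a)-marginals. -/
theorem injective_kernel_kl_cond_zero {S A : Type*} [Fintype S] [Fintype A]
    (P : S → A → S → ℝ) (μ₁ μ₂ : S → A → ℝ)
    (hPnonneg : ∀ s a s', 0 ≤ P s a s')
    (hPsum : ∀ s a, ∑ s', P s a s' = 1)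
    (hinj : ∀ s s' a a', 0 < P s a s' → 0 < P s a' s' → a = a')
    (hμ₁pos : ∀ s a, 0 < μ₁ s a) (hμ₂pos : ∀ s a, 0 < μ₂ s a)
    (hμ₁sum : ∑ s, ∑ a, μ₁ s a = 1) (hμ₂sum : ∑ s, ∑ a, μ₂ s a = 1) :
    (∑ s, ∑ a, ∑ s', (μ₁ s a * P s a s') *
        Real.log ((μ₁ s a * P s a s' / ∑ b, μ₁ s b * P s b s')
          / (μ₂ s a * P s a s' / ∑ b, μ₂ s b * P s b s')) = 0)
    ∧ (∑ s, ∑ s', (∑ b, μ₁ s b * P s b s') *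
          Real.log ((∑ b, μ₁ s b * P s b s') / (∑ b, μ₂ s b * P s b s'))
        = ∑ s, ∑ a, μ₁ s a * Real.log (μ₁ s a / μ₂ s a)) := by
  have key : ∀ (μ : S → A → ℝ) (s : S) (a : A) (s' : S), 0 < P s a s' →
      ∑ b, μ s b * P s b s' = μ s a * P s a s' := by
    intro μ s a s' hP
    refine Finset.sum_eq_single a (fun b _ hb => ?_)
      (fun h => (h (Finset.mem_univ a)).elim)
    have hb0 : P s b s' = 0 := by
      rcases (hPnonneg s b s').lt_or_eq with h | h
      · exact absurd (hinj s s' b a h hP) hb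
      · exact h.symm
    simp [hb0]
  constructor
  · refine Finset.sum_eq_zero fun s _ => Finset.sum_eq_zero fun a _ =>
      Finset.sum_eq_zero fun s' _ => ?_
    rcases (hPnonneg s a s').lt_or_eq with hP | hP
    · rw [key μ₁ s a s' hP, key μ₂ s a s' hP]
      have h1 : 0 < μ₁ s a * P s a s' := mul_pos (hμ₁pos s a) hP
      have h2 : 0 < μ₂ s a * P s a s' := mul_pos (hμ₂pos s a) hP
      rw [div_self h1.ne', div_self h2.ne', div_one, Real.log_one, mul_zero]
    · rw [← hP, mul_zero, zero_mul]
  · refine Finset.sum_congr rfl fun s _ => ?_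
    have hterm : ∀ s', (∑ b, μ₁ s b * P s b s') *
        Real.log ((∑ b, μ₁ s b * P s b s') / (∑ b, μ₂ s b * P s b s'))
        = ∑ a, μ₁ s a * P s a s' * Real.log (μ₁ s a / μ₂ s a) := by
      intro s'
      rw [Finset.sum_mul]
      refine Finset.sum_congr rfl fun a _ => ?_
      rcases (hPnonneg s a s').lt_or_eq with hP | hP
      · rw [key μ₁ s a s' hP, key μ₂ s a s' hP,
          mul_div_mul_right _ _ hP.ne']
      · rw [← hP, mul_zero, zero_mul, zero_mul]
    calc ∑ s', (∑ b, μ₁ s b * P s b s') *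
          Real.log ((∑ b, μ₁ s b * P s b s') / (∑ b, μ₂ s b * P s b s'))
        = ∑ s', ∑ a, μ₁ s a * P s a s' * Real.log (μ₁ s a / μ₂ s a) :=
          Finset.sum_congr rfl fun s' _ => hterm s'
      _ = ∑ a, ∑ s', μ₁ s a * P s a s' * Real.log (μ₁ s a / μ₂ s a) :=
          Finset.sum_comm
      _ = ∑ a, μ₁ s a * Real.log (μ₁ s a / μ₂ s a) := by
          refine Finset.sum_congr rfl fun a _ => ?_
          have : ∑ s', μ₁ s a * P s a s' * Real.log (μ₁ s a / μ₂ s a)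
              = (μ₁ s a * Real.log (μ₁ s a / μ₂ s a)) * ∑ s', P s a s' := by
            rw [Finset.mul_sum]
            exact Finset.sum_congr rfl fun s' _ => by ring
          rw [this, hPsum, mul_one]
end

section
/- (LSGAN generator objective equals a chi-squared divergence) Let p, q : X → ℝ>0 be probability mass functions on a finite set X, and let D*(x) = (b·q(x) + a·p(x))/(q(x) + p(x)) be the optimal discriminator. Define 2C = ∑_x q(x)(D*(x) − c)² + ∑_x p(x)(D*(x) − c)². If b − c = 1 and b − a = 2, then 2C = D_χ²(2p || p + q) = ∑_x (2p(x) − (p(x)+q(x)))²/(p(x)+q(x)). -/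
theorem lsgan_generator_chiSq {X : Type*} [Fintype X] (p q : X → ℝ) (a b c : ℝ)
    (hp : ∀ x, 0 < p x) (hq : ∀ x, 0 < q x)
    (hpsum : ∑ x, p x = 1) (hqsum : ∑ x, q x = 1)
    (hbc : b - c = 1) (hba : b - a = 2) :
    (∑ x, q x * ((b * q x + a * p x) / (q x + p x) - c) ^ 2)
      + ∑ x, p x * ((b * q x + a * p x) / (q x + p x) - c) ^ 2
    = ∑ x, (2 * p x - (p x + q x)) ^ 2 / (p x + q x) := by
  rw [← Finset.sum_add_distrib]
  apply Finset.sum_congr rfl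
  intro x _
  have h1 : q x + p x ≠ 0 := ne_of_gt (by linarith [hp x, hq x])
  have h2 : p x + q x ≠ 0 := ne_of_gt (by linarith [hp x, hq x])
  have hc : c = b - 1 := by linarith
  have ha : a = b - 2 := by linarith
  subst hc ha
  field_simp
  ring
end

section
/- (Composite divergence bound used in Theorem 1) For strictly positive joint pmfs ρ_1, ρ_2 on a finite set Y = S × A × S with marginals ρ̄_i on S × S and conditionals ρ_i(a|s,s'), the total variation between the (s,a)-marginals μ_1, μ_2 (when ρ_i(s,a,s') = μ_i(s,a)P(s'|s,a) for a common kernel P) satisfies 2·D_TV(μ_1,μ_2)² ≤ E_{ρ_1}[log(ρ_1(a|s,s')/ρ_2(a|s,s'))] + D_KL(ρ̄_1||ρ̄_2). -/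
lemma log_pade_mono : MonotoneOn (fun x : ℝ => Real.log x - 2*(x-1)/(x+1)) (Set.Ioi 0) := by
  have hD : ∀ x : ℝ, 0 < x → HasDerivAt (fun x : ℝ => Real.log x - 2*(x-1)/(x+1))
      (x⁻¹ - (2*1*(x+1) - 2*(x-1)*1)/(x+1)^2) x := by
    intro x hx
    have h1 : HasDerivAt (fun x : ℝ => 2*(x-1)) (2*1) x :=
      ((hasDerivAt_id x).sub_const 1).const_mul 2
    have h2 : HasDerivAt (fun x : ℝ => x+1) 1 x := (hasDerivAt_id x).add_const 1
    exact (Real.hasDerivAt_log hx.ne').sub (h1.div h2 (by nlinarith))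
  apply monotoneOn_of_deriv_nonneg (convex_Ioi 0)
  · intro x hx
    exact ((hD x hx).differentiableAt).continuousAt.continuousWithinAt
  · intro x hx
    rw [interior_Ioi] at hx
    exact ((hD x hx).differentiableAt).differentiableWithinAt

  · intro x hx
    rw [interior_Ioi] at hx
    have hx0 : (0:ℝ) < x := hx
    rw [(hD x hx0).deriv]
    have hx1 : (0:ℝ) < x + 1 := by linarith
    rw [sub_nonneg, div_le_iff₀ (by positivity), inv_mul_eq_div, le_div_iff₀ hx0]
    nlinarith [sq_nonneg (x-1)]

lemma log_pade_ge {x : ℝ} (hx : 1 ≤ x) : 2*(x-1)/(x+1) ≤ Real.log x := by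
  have := log_pade_mono (by norm_num : (1:ℝ) ∈ Set.Ioi 0)
    (Set.mem_Ioi.2 (by linarith)) hx
  simp only [Real.log_one] at this
  have e : (0:ℝ) - 2*(1-1)/(1+1) = 0 := by norm_num
  rw [e] at this
  linarith

lemma log_pade_le {x : ℝ} (hx0 : 0 < x) (hx : x ≤ 1) : Real.log x ≤ 2*(x-1)/(x+1) := by
  have := log_pade_mono (Set.mem_Ioi.2 hx0) (by norm_num : (1:ℝ) ∈ Set.Ioi 0) hx
  simp only [Real.log_one] at this
  norm_num at this
  linarith [this]

section
variable (dummy : Unit)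

noncomputable def gfun (x : ℝ) : ℝ := x * Real.log x - x + 1 - 3*(x-1)^2/(2*(x+2))

lemma gderiv {x : ℝ} (hx : 0 < x) :
    HasDerivAt gfun (Real.log x - 3*(x-1)*(x+5)/(2*(x+2)^2)) x := by
  have h1 : HasDerivAt (fun x : ℝ => x * Real.log x) (1 * Real.log x + x * x⁻¹) x :=
    (hasDerivAt_id x).mul (Real.hasDerivAt_log hx.ne')
  have h2 : HasDerivAt (fun x : ℝ => 3*(x-1)^2) (3*((2:ℕ)*(x-1)^1*1)) x :=
    (((hasDerivAt_id x).sub_const 1).pow 2).const_mul 3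
  have h3 : HasDerivAt (fun x : ℝ => 2*(x+2)) (2*1) x :=
    ((hasDerivAt_id x).add_const 2).const_mul 2
  have hne : 2*(x+2) ≠ 0 := by positivity
  have h4 := h2.div h3 hne
  have h5 := ((h1.sub (hasDerivAt_id x)).add_const 1).sub h4
  refine h5.congr_deriv ?_
  rw [mul_inv_cancel₀ hx.ne']
  field_simp
  ring

lemma mul_log_key {x : ℝ} (hx : 0 < x) : 3*(x-1)^2/(2*(x+2)) ≤ x * Real.log x - x + 1 := by
  have hg1 : gfun 1 = 0 := by simp [gfun]
  have hnonneg : 0 ≤ gfun x := by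
    rcases le_total 1 x with h | h
    · have mono : MonotoneOn gfun (Set.Ici 1) := by
        apply monotoneOn_of_deriv_nonneg (convex_Ici 1)
        · intro y hy
          have hy0 : (0:ℝ) < y := lt_of_lt_of_le one_pos hy
          exact (gderiv hy0).differentiableAt.continuousAt.continuousWithinAt
        · intro y hy
          rw [interior_Ici] at hy
          have hy0 : (0:ℝ) < y := lt_trans one_pos hy
          exact (gderiv hy0).differentiableAt.differentiableWithinAt
        · intro y hy
          rw [interior_Ici] at hy
          have hy1 : (1:ℝ) ≤ y := le_of_lt hy
          have hy0 : (0:ℝ) < y := lt_trans one_pos hy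
          rw [(gderiv hy0).deriv, sub_nonneg]
          have hlog := log_pade_ge hy1
          have hpoly : 3*(y-1)*(y+5)/(2*(y+2)^2) ≤ 2*(y-1)/(y+1) := by
            rw [div_le_div_iff₀ (by positivity) (by positivity)]
            nlinarith [mul_nonneg (sub_nonneg.2 hy1) (sq_nonneg (y-1))]
          linarith
      have := mono (Set.mem_Ici.2 le_rfl) (Set.mem_Ici.2 h) h
      rwa [hg1] at this
    · have anti : AntitoneOn gfun (Set.Ioc 0 1) := by
        apply antitoneOn_of_deriv_nonpos (convex_Ioc 0 1)
        · intro y hy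
          exact (gderiv hy.1).differentiableAt.continuousAt.continuousWithinAt
        · intro y hy
          rw [interior_Ioc] at hy
          exact (gderiv hy.1).differentiableAt.differentiableWithinAt
        · intro y hy
          rw [interior_Ioc] at hy
          have hy0 := hy.1
          have hy1 := le_of_lt hy.2
          rw [(gderiv hy0).deriv, sub_nonpos]
          have hlog := log_pade_le hy0 hy1
          have hpoly : 2*(y-1)/(y+1) ≤ 3*(y-1)*(y+5)/(2*(y+2)^2) := by
            rw [div_le_div_iff₀ (by positivity) (by positivity)]
            nlinarith [mul_nonneg (sub_nonneg.2 hy1) (sq_nonneg (y-1))]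
          linarith
      have := anti (Set.mem_Ioc.2 ⟨hx, h⟩) (Set.mem_Ioc.2 ⟨one_pos, le_rfl⟩) h
      rwa [hg1] at this
  have : gfun x = x * Real.log x - x + 1 - 3*(x-1)^2/(2*(x+2)) := rfl
  linarith [hnonneg, this.ge]

end
lemma pinsker_fin {ι : Type*} [Fintype ι] (p q : ι → ℝ)
    (hp : ∀ i, 0 < p i) (hq : ∀ i, 0 < q i)
    (hp1 : ∑ i, p i = 1) (hq1 : ∑ i, q i = 1) :
    2 * ((1/2) * ∑ i, |p i - q i|) ^ 2 ≤ ∑ i, p i * Real.log (p i / q i) := by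
  have hkey : ∀ i, 3*(p i - q i)^2/(2*(p i + 2*q i))
      ≤ p i * Real.log (p i / q i) - p i + q i := by
    intro i
    have hpi := hp i; have hqi := hq i
    have h := mul_log_key (x := p i / q i) (by positivity)
    have e1 : 3*(p i - q i)^2/(2*(p i + 2*q i))
        = q i * (3*(p i / q i - 1)^2/(2*(p i / q i + 2))) := by
      field_simp
    have e2 : p i * Real.log (p i / q i) - p i + q i
        = q i * ((p i / q i) * Real.log (p i / q i) - p i / q i + 1) := by
      field_simp
    rw [e1, e2]
    exact mul_le_mul_of_nonneg_left h hqi.le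
  have hsum : ∑ i, 3*(p i - q i)^2/(2*(p i + 2*q i)) ≤ ∑ i, p i * Real.log (p i / q i) := by
    calc ∑ i, 3*(p i - q i)^2/(2*(p i + 2*q i))
        ≤ ∑ i, (p i * Real.log (p i / q i) - p i + q i) :=
          Finset.sum_le_sum fun i _ => hkey i
      _ = ∑ i, p i * Real.log (p i / q i) := by
          rw [Finset.sum_add_distrib, Finset.sum_sub_distrib, hp1, hq1]
          ring
  have hcs : (∑ i, |p i - q i|)^2 ≤ (∑ i, (p i - q i)^2/(p i + 2*q i)) * 3 := by
    have h := Finset.sum_mul_sq_le_sq_mul_sq Finset.univ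
      (fun i => |p i - q i| / Real.sqrt (p i + 2*q i))
      (fun i => Real.sqrt (p i + 2*q i))
    have e1 : ∀ i : ι, |p i - q i| / Real.sqrt (p i + 2*q i) * Real.sqrt (p i + 2*q i)
        = |p i - q i| := by
      intro i
      rw [div_mul_cancel₀]
      exact (Real.sqrt_pos.2 (by nlinarith [hp i, hq i])).ne'
    have e2 : ∀ i : ι, (|p i - q i| / Real.sqrt (p i + 2*q i))^2
        = (p i - q i)^2/(p i + 2*q i) := by
      intro i
      rw [div_pow, sq_abs, Real.sq_sqrt (by nlinarith [hp i, hq i])]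
    have e3 : ∀ i : ι, (Real.sqrt (p i + 2*q i))^2 = p i + 2*q i := fun i =>
      Real.sq_sqrt (by nlinarith [hp i, hq i])
    simp only [e1, e2, e3] at h
    calc (∑ i, |p i - q i|)^2 ≤ (∑ i, (p i - q i)^2/(p i + 2*q i)) * ∑ i, (p i + 2*q i) := h
      _ = (∑ i, (p i - q i)^2/(p i + 2*q i)) * 3 := by
          rw [Finset.sum_add_distrib, hp1, ← Finset.mul_sum, hq1]
          norm_num
  have e4 : ∑ i, 3*(p i - q i)^2/(2*(p i + 2*q i))
      = (3/2) * ∑ i, (p i - q i)^2/(p i + 2*q i) := by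
    rw [Finset.mul_sum]
    refine Finset.sum_congr rfl fun i _ => ?_
    have hp' := hp i
    have hq' := hq i
    have hb : p i + 2*q i ≠ 0 := by positivity
    field_simp
    try ring
  nlinarith [hsum, hcs, e4]
theorem composite_divergence_bound {S A : Type*} [Fintype S] [Fintype A]
    (P : S → A → S → ℝ) (μ₁ μ₂ : S → A → ℝ)
    (hPpos : ∀ s a s', 0 < P s a s') (hPsum : ∀ s a, ∑ s', P s a s' = 1)
    (hμ₁pos : ∀ s a, 0 < μ₁ s a) (hμ₂pos : ∀ s a, 0 < μ₂ s a)
    (hμ₁sum : ∑ s, ∑ a, μ₁ s a = 1) (hμ₂sum : ∑ s, ∑ a, μ₂ s a = 1) :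
    2 * ((1 / 2) * ∑ s, ∑ a, |μ₁ s a - μ₂ s a|) ^ 2
      ≤ (∑ s, ∑ a, ∑ s', (μ₁ s a * P s a s') *
            Real.log ((μ₁ s a * P s a s' / ∑ b, μ₁ s b * P s b s')
              / (μ₂ s a * P s a s' / ∑ b, μ₂ s b * P s b s')))
        + ∑ s, ∑ s', (∑ b, μ₁ s b * P s b s') *
            Real.log ((∑ b, μ₁ s b * P s b s') / (∑ b, μ₂ s b * P s b s')) := by
  have hS : Nonempty S := by
    by_contra h
    rw [not_nonempty_iff] at h
    simp at hμ₁sum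
  have hA : Nonempty A := by
    by_contra h
    rw [not_nonempty_iff] at h
    simp at hμ₁sum
  have hr₁pos : ∀ s s', 0 < ∑ b, μ₁ s b * P s b s' := fun s s' =>
    Finset.sum_pos (fun b _ => mul_pos (hμ₁pos s b) (hPpos s b s')) Finset.univ_nonempty
  have hr₂pos : ∀ s s', 0 < ∑ b, μ₂ s b * P s b s' := fun s s' =>
    Finset.sum_pos (fun b _ => mul_pos (hμ₂pos s b) (hPpos s b s')) Finset.univ_nonempty
  -- expand the log of the conditional ratio
  have hlog : ∀ s a s', Real.log ((μ₁ s a * P s a s' / ∑ b, μ₁ s b * P s b s')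
        / (μ₂ s a * P s a s' / ∑ b, μ₂ s b * P s b s'))
      = Real.log (μ₁ s a / μ₂ s a)
        + (Real.log (∑ b, μ₂ s b * P s b s') - Real.log (∑ b, μ₁ s b * P s b s')) := by
    intro s a s'
    have h1 : 0 < μ₁ s a * P s a s' := mul_pos (hμ₁pos s a) (hPpos s a s')
    have h2 : 0 < μ₂ s a * P s a s' := mul_pos (hμ₂pos s a) (hPpos s a s')
    rw [Real.log_div (div_pos h1 (hr₁pos s s')).ne' (div_pos h2 (hr₂pos s s')).ne',
        Real.log_div h1.ne' ((hr₁pos s s').ne'),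
        Real.log_div h2.ne' ((hr₂pos s s').ne'),
        Real.log_div ((hμ₁pos s a).ne') ((hμ₂pos s a).ne'),
        Real.log_mul ((hμ₁pos s a).ne') ((hPpos s a s').ne'),
        Real.log_mul ((hμ₂pos s a).ne') ((hPpos s a s').ne')]
    ring
  -- inner sum over s' splits
  have key1 : ∀ s a, ∑ s', (μ₁ s a * P s a s') *
        Real.log ((μ₁ s a * P s a s' / ∑ b, μ₁ s b * P s b s')
          / (μ₂ s a * P s a s' / ∑ b, μ₂ s b * P s b s'))
      = μ₁ s a * Real.log (μ₁ s a / μ₂ s a)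
        + ∑ s', (μ₁ s a * P s a s') *
            (Real.log (∑ b, μ₂ s b * P s b s') - Real.log (∑ b, μ₁ s b * P s b s')) := by
    intro s a
    calc ∑ s', (μ₁ s a * P s a s') *
          Real.log ((μ₁ s a * P s a s' / ∑ b, μ₁ s b * P s b s')
            / (μ₂ s a * P s a s' / ∑ b, μ₂ s b * P s b s'))
        = ∑ s', ((μ₁ s a * Real.log (μ₁ s a / μ₂ s a)) * P s a s'
            + (μ₁ s a * P s a s') *
              (Real.log (∑ b, μ₂ s b * P s b s') - Real.log (∑ b, μ₁ s b * P s b s'))) := by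
          refine Finset.sum_congr rfl fun s' _ => ?_
          rw [hlog s a s']
          ring
      _ = μ₁ s a * Real.log (μ₁ s a / μ₂ s a)
          + ∑ s', (μ₁ s a * P s a s') *
              (Real.log (∑ b, μ₂ s b * P s b s') - Real.log (∑ b, μ₁ s b * P s b s')) := by
          rw [Finset.sum_add_distrib, ← Finset.mul_sum, hPsum s a, mul_one]
  -- the cross terms cancel with the marginal KL sum
  have key2 : ∀ s, (∑ a, ∑ s', (μ₁ s a * P s a s') *
        (Real.log (∑ b, μ₂ s b * P s b s') - Real.log (∑ b, μ₁ s b * P s b s')))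
      + ∑ s', (∑ b, μ₁ s b * P s b s') *
          Real.log ((∑ b, μ₁ s b * P s b s') / (∑ b, μ₂ s b * P s b s')) = 0 := by
    intro s
    rw [Finset.sum_comm, ← Finset.sum_add_distrib]
    apply Finset.sum_eq_zero
    intro s' _
    rw [← Finset.sum_mul, Real.log_div ((hr₁pos s s').ne') ((hr₂pos s s').ne')]
    ring
  have hRHS : (∑ s, ∑ a, ∑ s', (μ₁ s a * P s a s') *
            Real.log ((μ₁ s a * P s a s' / ∑ b, μ₁ s b * P s b s')
              / (μ₂ s a * P s a s' / ∑ b, μ₂ s b * P s b s')))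
        + ∑ s, ∑ s', (∑ b, μ₁ s b * P s b s') *
            Real.log ((∑ b, μ₁ s b * P s b s') / (∑ b, μ₂ s b * P s b s'))
      = ∑ s, ∑ a, μ₁ s a * Real.log (μ₁ s a / μ₂ s a) := by
    rw [← Finset.sum_add_distrib]
    refine Finset.sum_congr rfl fun s _ => ?_
    calc (∑ a, ∑ s', (μ₁ s a * P s a s') *
            Real.log ((μ₁ s a * P s a s' / ∑ b, μ₁ s b * P s b s')
              / (μ₂ s a * P s a s' / ∑ b, μ₂ s b * P s b s')))
          + ∑ s', (∑ b, μ₁ s b * P s b s') *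
              Real.log ((∑ b, μ₁ s b * P s b s') / (∑ b, μ₂ s b * P s b s'))
        = (∑ a, μ₁ s a * Real.log (μ₁ s a / μ₂ s a))
          + ((∑ a, ∑ s', (μ₁ s a * P s a s') *
              (Real.log (∑ b, μ₂ s b * P s b s') - Real.log (∑ b, μ₁ s b * P s b s')))
            + ∑ s', (∑ b, μ₁ s b * P s b s') *
                Real.log ((∑ b, μ₁ s b * P s b s') / (∑ b, μ₂ s b * P s b s'))) := by
          rw [Finset.sum_congr rfl fun a _ => key1 s a, Finset.sum_add_distrib]
          ring
      _ = ∑ a, μ₁ s a * Real.log (μ₁ s a / μ₂ s a) := by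
          rw [key2 s, add_zero]
  rw [hRHS]
  have hp := pinsker_fin (ι := S × A) (fun x => μ₁ x.1 x.2) (fun x => μ₂ x.1 x.2)
    (fun x => hμ₁pos x.1 x.2) (fun x => hμ₂pos x.1 x.2)
    (by rw [Fintype.sum_prod_type]; exact hμ₁sum)
    (by rw [Fintype.sum_prod_type]; exact hμ₂sum)
  rw [Fintype.sum_prod_type] at hp
  rw [Fintype.sum_prod_type] at hp
  exact hp
end
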